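/- Well-posedness of the nonlinear Kolmogorov equation with bounded data: Fix T > 0. Suppose f assigns a real number f(s,x,r,z(·)) to every s ∈ [0,T], x ∈ K, r ∈ ℝ and z ∈ L²(K,𝒦,ν(s,x,dy)); that for every bounded 𝒦-measurable z : K → ℝ the map (s,x,r) ↦ f(s,x,r,z(·)) is measurable; that there exist constants L, L' ≥ 0 with |f(s,x,r,z(·)) − f(s,x,r',z'(·))| ≤ L'|r−r'| + L(∫_K |z(y)−z'(y)|² ν(s,x,dy))^{1/2} for all s,x,r,r',z,z'; that for every bounded measurable u : [0,T]×K → ℝ the map (s,x) ↦ f(s,x,u(s,x),u(s,·)−u(s,x)) is measurable; that g : K → ℝ is 𝒦-measurable; and that sup_{s∈[0,T], x∈K} (|g(x)| + |f(s,x,0,0)|) < ∞. Then there exists a unique bounded measurable function v : [0,T]×K → ℝ such that for all (t,x) ∈ [0,T]×K: v(t,x) = g(x) + ∫_t^T ∫_K (v(s,y) − v(s,x)) ν(s,x,dy) ds + ∫_t^T f(s,x,v(s,x),v(s,·) − v(s,x)) ds. -/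

import Mathlib

open MeasureTheory Set
open scoped ENNReal Classical

noncomputable section

namespace PureJumpBSDE

/-- A rate measure on the state space `K`: a transition measure `ν(t,x,·)`,
measurable in `(t,x)`, uniformly bounded, and with `ν(t,x,{x}) = 0`. -/
structure RateMeasure (K : Type*) [MeasurableSpace K] where
  ν : ℝ → K → Measure K
  measurable_coe : ∀ A : Set K, MeasurableSet A → Measurable fun p : ℝ × K => ν p.1 p.2 A
  bound : ℝ≥0∞
  bound_lt_top : bound < ⊤
  le_bound : ∀ t x, ν t x Set.univ ≤ bound
  no_self_jump : ∀ t x, ν t x {x} = 0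

variable {K : Type*} [MeasurableSpace K] {Ω : Type*} [MeasurableSpace Ω]

/-- The jump rate function `λ(t,x) = ν(t,x,K)` (as a real number). -/
def RateMeasure.lamR (μ : RateMeasure K) (t : ℝ) (x : K) : ℝ := (μ.ν t x Set.univ).toReal

/-- The jump measure `π(t,x,·) = ν(t,x,·)/λ(t,x)`, equal to `δ_x` when `λ(t,x) = 0`. -/
def RateMeasure.pi (μ : RateMeasure K) (t : ℝ) (x : K) : Measure K :=
  if μ.ν t x Set.univ = 0 then Measure.dirac x else (μ.ν t x Set.univ)⁻¹ • μ.ν t x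

/-- The σ-algebra `σ(X_r : r ∈ [t,s])`. -/
def filt (X : Ω → ℝ → K) (t s : ℝ) : MeasurableSpace Ω :=
  ⨆ r ∈ Set.Icc t s, MeasurableSpace.comap (fun ω => X ω r) inferInstance

/-- The jump times `T_n^t` of the trajectory, with values in `[0,∞]`
(`T_0^t = t`, `T_{n+1}^t = inf {s > T_n^t : X_s ≠ X_{T_n^t}}`, `inf ∅ = ∞`). -/
def jumpTime (X : Ω → ℝ → K) (t : ℝ) : ℕ → Ω → ℝ≥0∞
  | 0 => fun _ => ENNReal.ofReal t
  | n + 1 => fun ω =>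
      sInf {u : ℝ≥0∞ | ∃ s : ℝ, u = ENNReal.ofReal s ∧
        jumpTime X t n ω < ENNReal.ofReal s ∧
        X ω s ≠ X ω ((jumpTime X t n ω).toReal)}

/-- The left limit `X_{s-}(ω)` of a piecewise constant trajectory. -/
def leftLimit (X : Ω → ℝ → K) (ω : Ω) (s : ℝ) : K :=
  if h : ∃ y : K, ∃ ε > 0, ∀ r ∈ Set.Ico (s - ε) s, X ω r = y then h.choose else X ω s

/-- The predictable σ-algebra `𝒫^t` on `Ω × ℝ`, generated by the sets
`F × (a,b]` with `t ≤ a < b` and `F ∈ σ(X_r : r ∈ [t,a])`. -/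
def predSigma (X : Ω → ℝ → K) (t : ℝ) : MeasurableSpace (Ω × ℝ) :=
  MeasurableSpace.generateFrom
    {C | ∃ (F : Set Ω) (a b : ℝ), t ≤ a ∧ a < b ∧
      MeasurableSet[filt X t a] F ∧ C = F ×ˢ Set.Ioc a b}

/-- `𝒫^t ⊗ 𝒦`-measurability of a random field `H : Ω × ℝ × K → ℝ`. -/
def PredMeas2 (X : Ω → ℝ → K) (t : ℝ) (H : Ω → ℝ → K → ℝ) : Prop :=
  @Measurable ((Ω × ℝ) × K) ℝ ((predSigma X t).prod inferInstance) _
    fun p => H p.1.1 p.1.2 p.2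

/-- Progressive measurability of a real process on `[t,T]` with respect to the
filtration generated by `X` after `t`. -/
def ProgMeas (X : Ω → ℝ → K) (t T : ℝ) (Y : Ω → ℝ → ℝ) : Prop :=
  ∀ s, t ≤ s → s ≤ T →
    @Measurable (Ω × Set.Icc t s) ℝ ((filt X t s).prod inferInstance) _
      fun p => Y p.1 (p.2 : ℝ)

/-- The compensated stochastic integral
`∫_a^b ∫_K H_r(y) q^t(dr dy) = Σ_{n ≥ 1, a < T_n^t ≤ b} H_{T_n^t}(X_{T_n^t})
  − ∫_a^b ∫_K H_r(y) ν(r,X_r,dy) dr`. -/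
def qInt (μ : RateMeasure K) (X : Ω → ℝ → K) (t : ℝ) (H : Ω → ℝ → K → ℝ)
    (a b : ℝ) (ω : Ω) : ℝ :=
  (∑' n : ℕ, if 1 ≤ n ∧ ENNReal.ofReal a < jumpTime X t n ω ∧
        jumpTime X t n ω ≤ ENNReal.ofReal b
      then H ω (jumpTime X t n ω).toReal (X ω (jumpTime X t n ω).toReal) else 0)
    - ∫ r in Set.Ioc a b, (∫ y, H ω r y ∂(μ.ν r (X ω r)))

/-- Membership in `𝓛¹(p^t)`. -/
def MemL1 (μ : RateMeasure K) (X : Ω → ℝ → K) (P : Measure Ω) (t T : ℝ)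
    (H : Ω → ℝ → K → ℝ) : Prop :=
  PredMeas2 X t H ∧
    (∫⁻ ω, (∫⁻ r in Set.Ioc t T, ∫⁻ y, ENNReal.ofReal |H ω r y| ∂(μ.ν r (X ω r))) ∂P) < ⊤

/-- Membership in `𝓛²(p^t)`. -/
def MemL2 (μ : RateMeasure K) (X : Ω → ℝ → K) (P : Measure Ω) (t T : ℝ)
    (H : Ω → ℝ → K → ℝ) : Prop :=
  PredMeas2 X t H ∧
    (∫⁻ ω, (∫⁻ r in Set.Ioc t T, ∫⁻ y, ENNReal.ofReal ((H ω r y) ^ 2) ∂(μ.ν r (X ω r))) ∂P) < ⊤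

/-- Membership of the pair `(Y,Z)` in the space `𝕄^{t,x}`. -/
structure MemM (μ : RateMeasure K) (X : Ω → ℝ → K) (P : Measure Ω) (t T : ℝ)
    (Y : Ω → ℝ → ℝ) (Z : Ω → ℝ → K → ℝ) : Prop where
  progY : ProgMeas X t T Y
  predZ : PredMeas2 X t Z
  normY : (∫⁻ ω, (∫⁻ s in Set.Ioc t T, ENNReal.ofReal ((Y ω s) ^ 2)) ∂P) < ⊤
  normZ : (∫⁻ ω, (∫⁻ s in Set.Ioc t T,
      ∫⁻ y, ENNReal.ofReal ((Z ω s y) ^ 2) ∂(μ.ν s (X ω s))) ∂P) < ⊤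

/-- Identification of two pairs in `𝕄^{t,x}`: the `𝕄^{t,x}`-norm of the difference is zero. -/
def sameMM (μ : RateMeasure K) (X : Ω → ℝ → K) (P : Measure Ω) (t T : ℝ)
    (Y Y' : Ω → ℝ → ℝ) (Z Z' : Ω → ℝ → K → ℝ) : Prop :=
  (∫⁻ ω, (∫⁻ s in Set.Ioc t T, ENNReal.ofReal ((Y ω s - Y' ω s) ^ 2)) ∂P) = 0 ∧
  (∫⁻ ω, (∫⁻ s in Set.Ioc t T,
      ∫⁻ y, ENNReal.ofReal ((Z ω s y - Z' ω s y) ^ 2) ∂(μ.ν s (X ω s))) ∂P) = 0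

/-- Membership of `z : K → ℝ` in `L²(K,𝒦,ν(s,x,dy))`. -/
def InL2 (μ : RateMeasure K) (s : ℝ) (x : K) (z : K → ℝ) : Prop :=
  Measurable z ∧ (∫⁻ y, ENNReal.ofReal ((z y) ^ 2) ∂(μ.ν s x)) < ⊤

/-- Hypothesis (H) on the data `(f,g)` of the nonlinear BSDE, under the measure `P = P^{t,x}`.
By convention, `f s x r z = f s x r 0` whenever `z ∉ L²(ν(s,x,dy))`. -/
structure HypH (μ : RateMeasure K) (X : Ω → ℝ → K) (P : Measure Ω) (t T : ℝ)
    (f : ℝ → K → ℝ → (K → ℝ) → ℝ) (g : K → ℝ) (L L' : ℝ) : Prop where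
  hL : 0 ≤ L
  hL' : 0 ≤ L'
  g_meas : Measurable g
  g_sq : (∫⁻ ω, ENNReal.ofReal ((g (X ω T)) ^ 2) ∂P) < ⊤
  f_meas : ∀ z : K → ℝ, Measurable z → (∃ C, ∀ y, |z y| ≤ C) →
    Measurable fun p : (ℝ × K) × ℝ => f p.1.1 p.1.2 p.2 z
  f_lip : ∀ (s : ℝ) (x' : K) (r r' : ℝ) (z z' : K → ℝ), InL2 μ s x' z → InL2 μ s x' z' →
    |f s x' r z - f s x' r' z'| ≤ L' * |r - r'| +
      L * Real.sqrt (∫⁻ y, ENNReal.ofReal ((z y - z' y) ^ 2) ∂(μ.ν s x')).toReal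
  f_conv : ∀ (s : ℝ) (x' : K) (r : ℝ) (z : K → ℝ), ¬ InL2 μ s x' z →
    f s x' r z = f s x' r fun _ => 0
  f_int : (∫⁻ ω, (∫⁻ s in Set.Ioc t T,
      ENNReal.ofReal ((f s (X ω s) 0 fun _ => 0) ^ 2)) ∂P) < ⊤

/-- The pair `(Y,Z)` solves the linear BSDE with generator `f̄` and final datum `ξ`. -/
def SolvesLin (μ : RateMeasure K) (X : Ω → ℝ → K) (P : Measure Ω) (t T : ℝ)
    (fbar : Ω → ℝ → ℝ) (ξ : Ω → ℝ) (Y : Ω → ℝ → ℝ) (Z : Ω → ℝ → K → ℝ) : Prop :=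
  ∀ᵐ ω ∂P, ∀ s ∈ Set.Icc t T,
    Y ω s + qInt μ X t Z s T ω = ξ ω + ∫ r in Set.Ioc s T, fbar ω r

/-- The pair `(Y,Z)` solves the nonlinear BSDE with generator `f` and final datum `g(X_T)`. -/
def SolvesBSDE (μ : RateMeasure K) (X : Ω → ℝ → K) (P : Measure Ω) (t T : ℝ)
    (f : ℝ → K → ℝ → (K → ℝ) → ℝ) (g : K → ℝ)
    (Y : Ω → ℝ → ℝ) (Z : Ω → ℝ → K → ℝ) : Prop :=
  ∀ᵐ ω ∂P, ∀ s ∈ Set.Icc t T,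
    Y ω s + qInt μ X t Z s T ω =
      g (X ω T) + ∫ r in Set.Ioc s T, f r (X ω r) (Y ω r) (Z ω r)

/-- A pure jump Markov process associated with the rate measure `μ`. -/
structure JumpProcess (μ : RateMeasure K) (Ω : Type*) [MeasurableSpace Ω] where
  X : Ω → ℝ → K
  P : ℝ → K → Measure Ω
  prob : ∀ t x, IsProbabilityMeasure (P t x)
  meas_X : ∀ s, Measurable fun ω => X ω s
  starts : ∀ t x, 0 ≤ t → P t x {ω | X ω t = x} = 1
  meas_in_x : ∀ t s : ℝ, 0 ≤ t → t ≤ s → ∀ A : Set K, MeasurableSet A →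
    Measurable fun x => P t x {ω | X ω s ∈ A}
  markov : ∀ u t s : ℝ, 0 ≤ u → u ≤ t → t ≤ s → ∀ x : K, ∀ A : Set K, MeasurableSet A →
    ∀ F : Set Ω, MeasurableSet[filt X u t] F →
      P u x (F ∩ {ω | X ω s ∈ A}) = ∫⁻ ω in F, P t (X ω t) {ω' | X ω' s ∈ A} ∂(P u x)
  right_const : ∀ ω t, ∃ δ > 0, ∀ s ∈ Set.Icc t (t + δ), X ω s = X ω t
  finite_jumps : ∀ ω (a b : ℝ),
    {s ∈ Set.Ioc a b | ¬ ∃ ε > 0, ∀ r ∈ Set.Ioo (s - ε) s, X ω r = X ω s}.Finite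
  jump_kernel : ∀ t x (a b : ℝ), 0 ≤ t → t ≤ a → a < b → ∀ A : Set K, MeasurableSet A →
    P t x {ω | ENNReal.ofReal a < jumpTime X t 1 ω ∧ jumpTime X t 1 ω < ENNReal.ofReal b ∧
        X ω (jumpTime X t 1 ω).toReal ∈ A} =
      ∫⁻ s in Set.Ioo a b,
        μ.pi s x A * ENNReal.ofReal (μ.lamR s x * Real.exp (-∫ r in Set.Ioc t s, μ.lamR r x))

/-- The hamiltonian function of the optimal control problem. -/
def ham {U : Type*} (μ : RateMeasure K) (rr : ℝ → K → K → U → ℝ) (l : ℝ → K → U → ℝ)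
    (s : ℝ) (x : K) (z : K → ℝ) : ℝ :=
  ⨅ u : U, (l s x u + ∫ y, z y * (rr s x y u - 1) ∂(μ.ν s x))

/-- The set `Γ(s,x,z(·))` of minimizers defining the hamiltonian. -/
def argminSet {U : Type*} (μ : RateMeasure K) (rr : ℝ → K → K → U → ℝ)
    (l : ℝ → K → U → ℝ) (s : ℝ) (x : K) (z : K → ℝ) : Set U :=
  {u0 | l s x u0 + ∫ y, z y * (rr s x y u0 - 1) ∂(μ.ν s x) = ham μ rr l s x z}

end PureJumpBSDE

namespace PureJumpBSDE

section Aux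

open ProbabilityTheory Filter

variable {K : Type*} [MeasurableSpace K]

instance RateMeasure.nu_finite (μ : RateMeasure K) (s : ℝ) (x : K) :
    IsFiniteMeasure (μ.ν s x) :=
  ⟨lt_of_le_of_lt (μ.le_bound s x) μ.bound_lt_top⟩

lemma RateMeasure.nu_toReal_le (μ : RateMeasure K) (s : ℝ) (x : K) :
    (μ.ν s x Set.univ).toReal ≤ μ.bound.toReal :=
  ENNReal.toReal_mono μ.bound_lt_top.ne (μ.le_bound s x)

/-- The rate measure as a finite kernel. -/
def RateMeasure.ker (μ : RateMeasure K) : Kernel (ℝ × K) K where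
  toFun p := μ.ν p.1 p.2
  measurable' := Measure.measurable_of_measurable_coe _ fun A hA => μ.measurable_coe A hA

lemma RateMeasure.ker_apply (μ : RateMeasure K) (p : ℝ × K) : μ.ker p = μ.ν p.1 p.2 := rfl

instance RateMeasure.ker_finite (μ : RateMeasure K) : IsFiniteKernel μ.ker :=
  ⟨⟨μ.bound, μ.bound_lt_top, fun p => μ.le_bound p.1 p.2⟩⟩

/-- Clamp of `t` to `[0,T]`. -/
def tauc (T t : ℝ) : ℝ := min (max t 0) T

lemma tauc_mem {T : ℝ} (hT : 0 ≤ T) (t : ℝ) : tauc T t ∈ Set.Icc 0 T :=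
  ⟨le_min (le_max_right _ _) hT, min_le_right _ _⟩

lemma tauc_eq {T t : ℝ} (ht : t ∈ Set.Icc 0 T) : tauc T t = t := by
  simp [tauc, max_eq_left ht.1, min_eq_left ht.2]

/-- The combined integrand of the Kolmogorov equation. -/
def FF (μ : RateMeasure K) (f : ℝ → K → ℝ → (K → ℝ) → ℝ) (u : ℝ → K → ℝ)
    (s : ℝ) (x : K) : ℝ :=
  (∫ y, (u s y - u s x) ∂(μ.ν s x)) + f s x (u s x) (fun y => u s y - u s x)

/-- The Picard map. -/
def Phi (μ : RateMeasure K) (T : ℝ) (f : ℝ → K → ℝ → (K → ℝ) → ℝ) (g : K → ℝ)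
    (u : ℝ → K → ℝ) (t : ℝ) (x : K) : ℝ :=
  g x + ∫ s in Set.Ioc (tauc T t) T, FF μ f u s x

/-- The Picard iterates. -/
def vseq (μ : RateMeasure K) (T : ℝ) (f : ℝ → K → ℝ → (K → ℝ) → ℝ) (g : K → ℝ) :
    ℕ → ℝ → K → ℝ
  | 0 => fun _ x => g x
  | n + 1 => Phi μ T f g (vseq μ T f g n)

section Lemmas

variable (μ : RateMeasure K) {T L L' C0 : ℝ}
variable {f : ℝ → K → ℝ → (K → ℝ) → ℝ} {g : K → ℝ}

lemma lint_sq_le {z : K → ℝ} {c : ℝ} (hc : 0 ≤ c) (hz : ∀ y, |z y| ≤ c) (s : ℝ) (x : K) :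
    (∫⁻ y, ENNReal.ofReal (z y ^ 2) ∂(μ.ν s x)) ≤ ENNReal.ofReal (c ^ 2) * μ.bound := by
  calc (∫⁻ y, ENNReal.ofReal (z y ^ 2) ∂(μ.ν s x))
      ≤ ∫⁻ _, ENNReal.ofReal (c ^ 2) ∂(μ.ν s x) := by
        refine lintegral_mono fun y => ENNReal.ofReal_le_ofReal ?_
        have h := abs_le.1 (hz y)
        exact sq_le_sq' (by linarith [h.1]) h.2
    _ = ENNReal.ofReal (c ^ 2) * μ.ν s x Set.univ := lintegral_const _
    _ ≤ ENNReal.ofReal (c ^ 2) * μ.bound := mul_le_mul_right (μ.le_bound s x) _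

lemma sqrt_lint_le {z z' : K → ℝ} {c : ℝ} (hc : 0 ≤ c)
    (h : ∀ y, |z y - z' y| ≤ c) (s : ℝ) (x : K) :
    Real.sqrt (∫⁻ y, ENNReal.ofReal ((z y - z' y) ^ 2) ∂(μ.ν s x)).toReal ≤
      c * Real.sqrt μ.bound.toReal := by
  have h1 := lint_sq_le μ hc h s x
  have h2 : (∫⁻ y, ENNReal.ofReal ((z y - z' y) ^ 2) ∂(μ.ν s x)).toReal ≤
      c ^ 2 * μ.bound.toReal := by
    have := ENNReal.toReal_mono
      (ENNReal.mul_ne_top ENNReal.ofReal_ne_top μ.bound_lt_top.ne) h1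
    rwa [ENNReal.toReal_mul, ENNReal.toReal_ofReal (sq_nonneg c)] at this
  calc Real.sqrt _ ≤ Real.sqrt (c ^ 2 * μ.bound.toReal) := Real.sqrt_le_sqrt h2
    _ = c * Real.sqrt μ.bound.toReal := by
        rw [Real.sqrt_mul (sq_nonneg c), Real.sqrt_sq hc]

lemma inL2_of_bounded {z : K → ℝ} {c : ℝ} (hzm : Measurable z) (hc : 0 ≤ c)
    (hz : ∀ y, |z y| ≤ c) (s : ℝ) (x : K) : InL2 μ s x z := by
  refine ⟨hzm, lt_of_le_of_lt (lint_sq_le μ hc hz s x) ?_⟩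
  exact ENNReal.mul_lt_top ENNReal.ofReal_lt_top μ.bound_lt_top

lemma meas_section {u : ℝ → K → ℝ} (hu : Measurable fun p : ℝ × K => u p.1 p.2) (s : ℝ) :
    Measurable fun y : K => u s y :=
  hu.comp measurable_prodMk_left

lemma integrable_inner {u : ℝ → K → ℝ} {Cu : ℝ}
    (hu : Measurable fun p : ℝ × K => u p.1 p.2) (hb : ∀ s x, |u s x| ≤ Cu)
    (s : ℝ) (x : K) : Integrable (fun y => u s y - u s x) (μ.ν s x) := by
  refine Integrable.mono' (integrable_const (2 * Cu))
    (((meas_section hu s).sub measurable_const).aestronglyMeasurable)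
    (Filter.Eventually.of_forall fun y => ?_)
  rw [Real.norm_eq_abs]
  calc |u s y - u s x| ≤ |u s y| + |u s x| := abs_sub _ _
    _ ≤ Cu + Cu := add_le_add (hb s y) (hb s x)
    _ = 2 * Cu := by ring

lemma inL2_section {u : ℝ → K → ℝ} {Cu : ℝ} (hCu : 0 ≤ Cu)
    (hu : Measurable fun p : ℝ × K => u p.1 p.2) (hb : ∀ s x, |u s x| ≤ Cu)
    (s : ℝ) (x : K) : InL2 μ s x (fun y => u s y - u s x) := by
  refine inL2_of_bounded μ ((meas_section hu s).sub measurable_const)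
    (by linarith : (0:ℝ) ≤ 2 * Cu) (fun y => ?_) s x
  calc |u s y - u s x| ≤ |u s y| + |u s x| := abs_sub _ _
    _ ≤ 2 * Cu := by linarith [hb s y, hb s x]

lemma inL2_zero (s : ℝ) (x : K) : InL2 μ s x (fun _ => 0) := by
  refine ⟨measurable_const, ?_⟩
  simp

/-- Pointwise bound on the difference of the combined integrand. -/
lemma FF_diff
    (hL : 0 ≤ L) (hL' : 0 ≤ L')
    (f_lip : ∀ (s : ℝ) (x : K) (r r' : ℝ) (z z' : K → ℝ), InL2 μ s x z → InL2 μ s x z' →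
      |f s x r z - f s x r' z'| ≤ L' * |r - r'| +
        L * Real.sqrt (∫⁻ y, ENNReal.ofReal ((z y - z' y) ^ 2) ∂(μ.ν s x)).toReal)
    {u u' : ℝ → K → ℝ} {Cu Cu' : ℝ} (hCu : 0 ≤ Cu) (hCu' : 0 ≤ Cu')
    (hu : Measurable fun p : ℝ × K => u p.1 p.2) (hbu : ∀ s x, |u s x| ≤ Cu)
    (hu' : Measurable fun p : ℝ × K => u' p.1 p.2) (hbu' : ∀ s x, |u' s x| ≤ Cu')
    {d : ℝ} (hd : 0 ≤ d) (s : ℝ) (hdx : ∀ x, |u s x - u' s x| ≤ d) (x : K) :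
    |FF μ f u s x - FF μ f u' s x| ≤
      (2 * μ.bound.toReal + L' + 2 * L * Real.sqrt μ.bound.toReal) * d := by
  set Lam := μ.bound.toReal with hLam
  have hLam0 : 0 ≤ Lam := ENNReal.toReal_nonneg
  have key : ∀ y, |(u s y - u s x) - (u' s y - u' s x)| ≤ 2 * d := by
    intro y
    have : (u s y - u s x) - (u' s y - u' s x) = (u s y - u' s y) - (u s x - u' s x) := by ring
    rw [this]
    calc |(u s y - u' s y) - (u s x - u' s x)| ≤ |u s y - u' s y| + |u s x - u' s x| :=
        abs_sub _ _
      _ ≤ 2 * d := by linarith [hdx y, hdx x]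
  have i1 := integrable_inner μ hu hbu s x
  have i2 := integrable_inner μ hu' hbu' s x
  have hI : |(∫ y, (u s y - u s x) ∂(μ.ν s x)) - ∫ y, (u' s y - u' s x) ∂(μ.ν s x)| ≤
      2 * d * Lam := by
    rw [← integral_sub i1 i2]
    calc |∫ y, ((u s y - u s x) - (u' s y - u' s x)) ∂(μ.ν s x)|
        ≤ 2 * d * (μ.ν s x Set.univ).toReal := by
          rw [← Real.norm_eq_abs]
          exact norm_integral_le_of_norm_le_const
            (Filter.Eventually.of_forall fun y => by
              rw [Real.norm_eq_abs]; exact key y)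
      _ ≤ 2 * d * Lam := by
          exact mul_le_mul_of_nonneg_left (μ.nu_toReal_le s x) (by linarith)
  have hz := inL2_section μ hCu hu hbu s x
  have hz' := inL2_section μ hCu' hu' hbu' s x
  have hF : |f s x (u s x) (fun y => u s y - u s x) -
      f s x (u' s x) (fun y => u' s y - u' s x)| ≤ L' * d + L * (2 * d * Real.sqrt Lam) := by
    refine le_trans (f_lip s x _ _ _ _ hz hz') ?_
    have h1 : L' * |u s x - u' s x| ≤ L' * d := mul_le_mul_of_nonneg_left (hdx x) hL'
    have h2 : Real.sqrt (∫⁻ y,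
        ENNReal.ofReal (((fun y => u s y - u s x) y - (fun y => u' s y - u' s x) y) ^ 2)
          ∂(μ.ν s x)).toReal ≤ 2 * d * Real.sqrt Lam :=
      sqrt_lint_le μ (by linarith) key s x
    have h2' := mul_le_mul_of_nonneg_left h2 hL
    linarith
  have hsplit : FF μ f u s x - FF μ f u' s x =
      ((∫ y, (u s y - u s x) ∂(μ.ν s x)) - ∫ y, (u' s y - u' s x) ∂(μ.ν s x)) +
      (f s x (u s x) (fun y => u s y - u s x) -
        f s x (u' s x) (fun y => u' s y - u' s x)) := by
    unfold FF; ring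
  calc |FF μ f u s x - FF μ f u' s x|
      ≤ |(∫ y, (u s y - u s x) ∂(μ.ν s x)) - ∫ y, (u' s y - u' s x) ∂(μ.ν s x)| +
        |f s x (u s x) (fun y => u s y - u s x) -
          f s x (u' s x) (fun y => u' s y - u' s x)| := by
        rw [hsplit]; exact abs_add_le _ _
    _ ≤ 2 * d * Lam + (L' * d + L * (2 * d * Real.sqrt Lam)) := add_le_add hI hF
    _ = (2 * Lam + L' + 2 * L * Real.sqrt Lam) * d := by ring

/-- Pointwise bound on the combined integrand itself. -/
lemma FF_bound
    (hL : 0 ≤ L) (hL' : 0 ≤ L')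
    (f_lip : ∀ (s : ℝ) (x : K) (r r' : ℝ) (z z' : K → ℝ), InL2 μ s x z → InL2 μ s x z' →
      |f s x r z - f s x r' z'| ≤ L' * |r - r'| +
        L * Real.sqrt (∫⁻ y, ENNReal.ofReal ((z y - z' y) ^ 2) ∂(μ.ν s x)).toReal)
    (hf0 : ∀ s ∈ Set.Icc (0:ℝ) T, ∀ x, |f s x 0 (fun _ => 0)| ≤ C0)
    {u : ℝ → K → ℝ} {Cu : ℝ} (hCu : 0 ≤ Cu)
    (hu : Measurable fun p : ℝ × K => u p.1 p.2) (hbu : ∀ s x, |u s x| ≤ Cu)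
    {s : ℝ} (hs : s ∈ Set.Icc (0:ℝ) T) (x : K) :
    |FF μ f u s x| ≤ 2 * Cu * μ.bound.toReal +
      (C0 + L' * Cu + 2 * L * Cu * Real.sqrt μ.bound.toReal) := by
  set Lam := μ.bound.toReal with hLam
  have hLam0 : 0 ≤ Lam := ENNReal.toReal_nonneg
  have hI : |∫ y, (u s y - u s x) ∂(μ.ν s x)| ≤ 2 * Cu * Lam := by
    calc |∫ y, (u s y - u s x) ∂(μ.ν s x)| ≤ 2 * Cu * (μ.ν s x Set.univ).toReal := by
          rw [← Real.norm_eq_abs]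
          refine norm_integral_le_of_norm_le_const (Filter.Eventually.of_forall fun y => ?_)
          rw [Real.norm_eq_abs]
          calc |u s y - u s x| ≤ |u s y| + |u s x| := abs_sub _ _
            _ ≤ 2 * Cu := by linarith [hbu s y, hbu s x]
      _ ≤ 2 * Cu * Lam := mul_le_mul_of_nonneg_left (μ.nu_toReal_le s x) (by linarith)
  have hz := inL2_section μ hCu hu hbu s x
  have hlip := f_lip s x (u s x) 0 (fun y => u s y - u s x) (fun _ => 0) hz (inL2_zero μ s x)
  have hsq : Real.sqrt (∫⁻ y,
      ENNReal.ofReal (((fun y => u s y - u s x) y - (fun _ => (0:ℝ)) y) ^ 2)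
        ∂(μ.ν s x)).toReal ≤ 2 * Cu * Real.sqrt Lam := by
    refine sqrt_lint_le μ (by linarith) (fun y => ?_) s x
    simp only [sub_zero]
    calc |u s y - u s x| ≤ |u s y| + |u s x| := abs_sub _ _
      _ ≤ 2 * Cu := by linarith [hbu s y, hbu s x]
  have hF : |f s x (u s x) (fun y => u s y - u s x)| ≤ C0 + L' * Cu + 2 * L * Cu * Real.sqrt Lam := by
    have h0 := hf0 s hs x
    have h1 : |f s x (u s x) (fun y => u s y - u s x)| ≤
        |f s x (u s x) (fun y => u s y - u s x) - f s x 0 (fun _ => 0)| +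
          |f s x 0 (fun _ => 0)| := by
      have := abs_add_le (f s x (u s x) (fun y => u s y - u s x) - f s x 0 (fun _ => 0))
        (f s x 0 (fun _ => 0))
      simpa using this
    have h2 : L' * |u s x - 0| ≤ L' * Cu := by
      rw [sub_zero]; exact mul_le_mul_of_nonneg_left (hbu s x) hL'
    have h3 := mul_le_mul_of_nonneg_left hsq hL
    -- hlip : |f .. - f ..| ≤ L' * |u s x - 0| + L * sqrt ...
    nlinarith [hlip, h1, h2, h3]
  calc |FF μ f u s x| ≤ |∫ y, (u s y - u s x) ∂(μ.ν s x)| +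
        |f s x (u s x) (fun y => u s y - u s x)| := abs_add_le _ _
    _ ≤ _ := add_le_add hI hF

/-- Joint measurability of the kernel part of `FF`. -/
lemma FF1_meas {u : ℝ → K → ℝ} (hu : Measurable fun p : ℝ × K => u p.1 p.2) :
    Measurable fun p : ℝ × K => ∫ y, (u p.1 y - u p.1 p.2) ∂(μ.ν p.1 p.2) := by
  have hum : Measurable fun q : (ℝ × K) × K => u q.1.1 q.2 - u q.1.1 q.1.2 := by
    have h1 : Measurable fun q : (ℝ × K) × K => u q.1.1 q.2 :=
      hu.comp ((measurable_fst.fst).prodMk measurable_snd)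
    have h2 : Measurable fun q : (ℝ × K) × K => u q.1.1 q.1.2 := hu.comp measurable_fst
    exact h1.sub h2
  have hsm : StronglyMeasurable
      (Function.uncurry fun (p : ℝ × K) (y : K) => u p.1 y - u p.1 p.2) :=
    hum.stronglyMeasurable
  have := (MeasureTheory.StronglyMeasurable.integral_kernel_prod_right
    (κ := μ.ker) hsm).measurable
  simpa [RateMeasure.ker_apply] using this

/-- Integrability on `(a,T]` of the nonlocal part, for `0 ≤ a`. -/
lemma FF1_integrableOn
    {u : ℝ → K → ℝ} {Cu : ℝ} (hCu : 0 ≤ Cu)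
    (hu : Measurable fun p : ℝ × K => u p.1 p.2) (hbu : ∀ s x, |u s x| ≤ Cu)
    {a : ℝ} (x : K) :
    MeasureTheory.IntegrableOn (fun s => ∫ y, (u s y - u s x) ∂(μ.ν s x))
      (Set.Ioc a T) := by
  have hmeas : Measurable fun s : ℝ => ∫ y, (u s y - u s x) ∂(μ.ν s x) :=
    (FF1_meas μ hu).comp
      ((measurable_id.prodMk (measurable_const : Measurable fun _ : ℝ => x)))
  refine Integrable.mono' (integrable_const (2 * Cu * μ.bound.toReal))
    hmeas.aestronglyMeasurable (Filter.Eventually.of_forall fun s => ?_)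
  calc ‖∫ y, (u s y - u s x) ∂(μ.ν s x)‖ ≤ 2 * Cu * (μ.ν s x Set.univ).toReal := by
        refine norm_integral_le_of_norm_le_const (Filter.Eventually.of_forall fun y => ?_)
        rw [Real.norm_eq_abs]
        calc |u s y - u s x| ≤ |u s y| + |u s x| := abs_sub _ _
          _ ≤ 2 * Cu := by linarith [hbu s y, hbu s x]
    _ ≤ 2 * Cu * μ.bound.toReal := mul_le_mul_of_nonneg_left (μ.nu_toReal_le s x) (by linarith)

/-- Integrability on `(a,T]` of the nonlinear part, for `0 ≤ a`. -/
lemma FF2_integrableOn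
    (hL : 0 ≤ L) (hL' : 0 ≤ L')
    (f_lip : ∀ (s : ℝ) (x : K) (r r' : ℝ) (z z' : K → ℝ), InL2 μ s x z → InL2 μ s x z' →
      |f s x r z - f s x r' z'| ≤ L' * |r - r'| +
        L * Real.sqrt (∫⁻ y, ENNReal.ofReal ((z y - z' y) ^ 2) ∂(μ.ν s x)).toReal)
    (hf0 : ∀ s ∈ Set.Icc (0:ℝ) T, ∀ x, |f s x 0 (fun _ => 0)| ≤ C0)
    {u : ℝ → K → ℝ} {Cu : ℝ} (hCu : 0 ≤ Cu)
    (hu : Measurable fun p : ℝ × K => u p.1 p.2) (hbu : ∀ s x, |u s x| ≤ Cu)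
    (hfm : Measurable fun p : ℝ × K =>
      f p.1 p.2 (u p.1 p.2) (fun y => u p.1 y - u p.1 p.2))
    {a : ℝ} (ha : 0 ≤ a) (x : K) :
    MeasureTheory.IntegrableOn
      (fun s => f s x (u s x) (fun y => u s y - u s x)) (Set.Ioc a T) := by
  have hmeas : Measurable fun s : ℝ => f s x (u s x) (fun y => u s y - u s x) :=
    hfm.comp ((measurable_id.prodMk (measurable_const : Measurable fun _ : ℝ => x)))
  refine Integrable.mono' (integrable_const (C0 + L' * Cu + 2 * L * Cu * Real.sqrt μ.bound.toReal))
    hmeas.aestronglyMeasurable ?_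
  refine (MeasureTheory.ae_restrict_iff' measurableSet_Ioc).2
    (Filter.Eventually.of_forall fun s hs => ?_)
  rw [Real.norm_eq_abs]
  have hs' : s ∈ Set.Icc (0:ℝ) T := ⟨le_trans ha hs.1.le, hs.2⟩
  set Lam := μ.bound.toReal with hLam
  have hLam0 : 0 ≤ Lam := ENNReal.toReal_nonneg
  have hz := inL2_section μ hCu hu hbu s x
  have hlip := f_lip s x (u s x) 0 (fun y => u s y - u s x) (fun _ => 0) hz (inL2_zero μ s x)
  have hsq : Real.sqrt (∫⁻ y,
      ENNReal.ofReal (((fun y => u s y - u s x) y - (fun _ => (0:ℝ)) y) ^ 2)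
        ∂(μ.ν s x)).toReal ≤ 2 * Cu * Real.sqrt Lam := by
    refine sqrt_lint_le μ (by linarith) (fun y => ?_) s x
    simp only [sub_zero]
    calc |u s y - u s x| ≤ |u s y| + |u s x| := abs_sub _ _
      _ ≤ 2 * Cu := by linarith [hbu s y, hbu s x]
  have h0 := hf0 s hs' x
  have h1 : |f s x (u s x) (fun y => u s y - u s x)| ≤
      |f s x (u s x) (fun y => u s y - u s x) - f s x 0 (fun _ => 0)| +
        |f s x 0 (fun _ => 0)| := by
    have := abs_add_le (f s x (u s x) (fun y => u s y - u s x) - f s x 0 (fun _ => 0))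
      (f s x 0 (fun _ => 0))
    simpa using this
  have h2 : L' * |u s x - 0| ≤ L' * Cu := by
    rw [sub_zero]; exact mul_le_mul_of_nonneg_left (hbu s x) hL'
  have h3 := mul_le_mul_of_nonneg_left hsq hL
  nlinarith [hlip, h1, h2, h3]

/-- Integrability on `(a,T]` of the combined integrand, for `0 ≤ a`. -/
lemma FF_integrableOn
    (hL : 0 ≤ L) (hL' : 0 ≤ L')
    (f_lip : ∀ (s : ℝ) (x : K) (r r' : ℝ) (z z' : K → ℝ), InL2 μ s x z → InL2 μ s x z' →
      |f s x r z - f s x r' z'| ≤ L' * |r - r'| +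
        L * Real.sqrt (∫⁻ y, ENNReal.ofReal ((z y - z' y) ^ 2) ∂(μ.ν s x)).toReal)
    (hf0 : ∀ s ∈ Set.Icc (0:ℝ) T, ∀ x, |f s x 0 (fun _ => 0)| ≤ C0)
    {u : ℝ → K → ℝ} {Cu : ℝ} (hCu : 0 ≤ Cu)
    (hu : Measurable fun p : ℝ × K => u p.1 p.2) (hbu : ∀ s x, |u s x| ≤ Cu)
    (hfm : Measurable fun p : ℝ × K =>
      f p.1 p.2 (u p.1 p.2) (fun y => u p.1 y - u p.1 p.2))
    {a : ℝ} (ha : 0 ≤ a) (x : K) :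
    MeasureTheory.IntegrableOn (fun s => FF μ f u s x) (Set.Ioc a T) := by
  have h1 := FF1_integrableOn (T := T) μ hCu hu hbu (a := a) x
  have h2 := FF2_integrableOn μ hL hL' f_lip hf0 hCu hu hbu hfm ha x
  exact h1.add h2

/-- Key contraction estimate for the Picard map. -/
lemma Phi_diff
    (hT0 : 0 ≤ T) (hL : 0 ≤ L) (hL' : 0 ≤ L')
    (f_lip : ∀ (s : ℝ) (x : K) (r r' : ℝ) (z z' : K → ℝ), InL2 μ s x z → InL2 μ s x z' →
      |f s x r z - f s x r' z'| ≤ L' * |r - r'| +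
        L * Real.sqrt (∫⁻ y, ENNReal.ofReal ((z y - z' y) ^ 2) ∂(μ.ν s x)).toReal)
    (hf0 : ∀ s ∈ Set.Icc (0:ℝ) T, ∀ x, |f s x 0 (fun _ => 0)| ≤ C0)
    {u u' : ℝ → K → ℝ} {Cu Cu' : ℝ} (hCu : 0 ≤ Cu) (hCu' : 0 ≤ Cu')
    (hu : Measurable fun p : ℝ × K => u p.1 p.2) (hbu : ∀ s x, |u s x| ≤ Cu)
    (hu' : Measurable fun p : ℝ × K => u' p.1 p.2) (hbu' : ∀ s x, |u' s x| ≤ Cu')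
    (hfm : Measurable fun p : ℝ × K =>
      f p.1 p.2 (u p.1 p.2) (fun y => u p.1 y - u p.1 p.2))
    (hfm' : Measurable fun p : ℝ × K =>
      f p.1 p.2 (u' p.1 p.2) (fun y => u' p.1 y - u' p.1 p.2))
    {ε : ℝ → ℝ} (hεm : Measurable ε)
    (hεint : MeasureTheory.IntegrableOn ε (Set.Ioc 0 T))
    (hεnn : ∀ s ∈ Set.Ioc (0:ℝ) T, 0 ≤ ε s)
    (hεb : ∀ s ∈ Set.Ioc (0:ℝ) T, ∀ x, |u s x - u' s x| ≤ ε s)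
    (t : ℝ) (x : K) :
    |Phi μ T f g u t x - Phi μ T f g u' t x| ≤
      (2 * μ.bound.toReal + L' + 2 * L * Real.sqrt μ.bound.toReal) *
        ∫ s in Set.Ioc (tauc T t) T, ε s := by
  set MM := 2 * μ.bound.toReal + L' + 2 * L * Real.sqrt μ.bound.toReal with hMM
  have hMM0 : 0 ≤ MM := by positivity
  obtain ⟨hτ0, hτT⟩ := tauc_mem hT0 t
  set τ := tauc T t
  have hsub : Set.Ioc τ T ⊆ Set.Ioc (0:ℝ) T :=
    fun s hs => ⟨lt_of_le_of_lt hτ0 hs.1, hs.2⟩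
  have h1 := FF_integrableOn μ hL hL' f_lip hf0 hCu hu hbu hfm hτ0 x
  have h2 := FF_integrableOn μ hL hL' f_lip hf0 hCu' hu' hbu' hfm' hτ0 x
  have hPhi : Phi μ T f g u t x - Phi μ T f g u' t x =
      ∫ s in Set.Ioc τ T, (FF μ f u s x - FF μ f u' s x) := by
    rw [MeasureTheory.integral_sub h1 h2]
    unfold Phi
    ring
  rw [hPhi]
  calc |∫ s in Set.Ioc τ T, (FF μ f u s x - FF μ f u' s x)|
      ≤ ∫ s in Set.Ioc τ T, |FF μ f u s x - FF μ f u' s x| := by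
        rw [← Real.norm_eq_abs]
        exact (norm_integral_le_integral_norm _).trans_eq (by simp [Real.norm_eq_abs])
    _ ≤ ∫ s in Set.Ioc τ T, MM * ε s := by
        refine MeasureTheory.integral_mono_of_nonneg
          (Filter.Eventually.of_forall fun s => abs_nonneg _)
          ((hεint.mono_set hsub).const_mul MM) ?_
        refine (MeasureTheory.ae_restrict_iff' measurableSet_Ioc).2
          (Filter.Eventually.of_forall fun s hs => ?_)
        exact FF_diff μ hL hL' f_lip hCu hCu' hu hbu hu' hbu'
          (hεnn s (hsub hs)) s (hεb s (hsub hs)) x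
    _ = MM * ∫ s in Set.Ioc τ T, ε s := MeasureTheory.integral_const_mul _ _

/-- Crude bound for the Picard map. -/
lemma Phi_sub_g_bound
    (hT0 : 0 ≤ T) (hL : 0 ≤ L) (hL' : 0 ≤ L') (hC0 : 0 ≤ C0)
    (f_lip : ∀ (s : ℝ) (x : K) (r r' : ℝ) (z z' : K → ℝ), InL2 μ s x z → InL2 μ s x z' →
      |f s x r z - f s x r' z'| ≤ L' * |r - r'| +
        L * Real.sqrt (∫⁻ y, ENNReal.ofReal ((z y - z' y) ^ 2) ∂(μ.ν s x)).toReal)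
    (hf0 : ∀ s ∈ Set.Icc (0:ℝ) T, ∀ x, |f s x 0 (fun _ => 0)| ≤ C0)
    {u : ℝ → K → ℝ} {Cu : ℝ} (hCu : 0 ≤ Cu)
    (hu : Measurable fun p : ℝ × K => u p.1 p.2) (hbu : ∀ s x, |u s x| ≤ Cu)
    (t : ℝ) (x : K) :
    |Phi μ T f g u t x - g x| ≤
      T * (2 * Cu * μ.bound.toReal + (C0 + L' * Cu + 2 * L * Cu * Real.sqrt μ.bound.toReal)) := by
  set A := 2 * Cu * μ.bound.toReal + (C0 + L' * Cu + 2 * L * Cu * Real.sqrt μ.bound.toReal)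
    with hA
  have hA0 : 0 ≤ A := by positivity
  obtain ⟨hτ0, hτT⟩ := tauc_mem hT0 t
  set τ := tauc T t
  have : Phi μ T f g u t x - g x = ∫ s in Set.Ioc τ T, FF μ f u s x := by
    unfold Phi; ring
  rw [this, ← Real.norm_eq_abs]
  calc ‖∫ s in Set.Ioc τ T, FF μ f u s x‖
      ≤ A * (MeasureTheory.volume (Set.Ioc τ T)).toReal := by
        refine MeasureTheory.norm_setIntegral_le_of_norm_le_const
          (by simp [Real.volume_Ioc]) (fun s hs => ?_)
        rw [Real.norm_eq_abs]
        exact FF_bound μ hL hL' f_lip hf0 hCu hu hbu ⟨le_trans hτ0 hs.1.le, hs.2⟩ x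
    _ ≤ A * T := by
        rw [Real.volume_Ioc, ENNReal.toReal_ofReal (by linarith)]
        exact mul_le_mul_of_nonneg_left (by linarith) hA0
    _ = T * A := mul_comm _ _

/-- Joint measurability of the Picard map. -/
lemma Phi_meas
    (hT0 : 0 ≤ T) (hg : Measurable g)
    {u : ℝ → K → ℝ} (hu : Measurable fun p : ℝ × K => u p.1 p.2)
    (hfm : Measurable fun p : ℝ × K =>
      f p.1 p.2 (u p.1 p.2) (fun y => u p.1 y - u p.1 p.2)) :
    Measurable fun p : ℝ × K => Phi μ T f g u p.1 p.2 := by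
  have hFF : Measurable fun p : ℝ × K => FF μ f u p.1 p.2 := (FF1_meas μ hu).add hfm
  have htau : Measurable fun t : ℝ => tauc T t :=
    ((continuous_id.max continuous_const).min continuous_const).measurable
  have hrw : ∀ t x, Phi μ T f g u t x = g x +
      ∫ s in Set.Ioc (0:ℝ) T, (Set.Ioi (tauc T t)).indicator (fun s => FF μ f u s x) s := by
    intro t x
    obtain ⟨hτ0, hτT⟩ := tauc_mem hT0 t
    rw [MeasureTheory.integral_indicator measurableSet_Ioi,
      MeasureTheory.Measure.restrict_restrict measurableSet_Ioi]
    have hset : Set.Ioi (tauc T t) ∩ Set.Ioc 0 T = Set.Ioc (tauc T t) T := by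
      ext s
      simp only [Set.mem_inter_iff, Set.mem_Ioi, Set.mem_Ioc]
      constructor
      · rintro ⟨h1, _, h3⟩; exact ⟨h1, h3⟩
      · rintro ⟨h1, h2⟩; exact ⟨h1, lt_of_le_of_lt hτ0 h1, h2⟩
    rw [hset]
    rfl
  have : (fun p : ℝ × K => Phi μ T f g u p.1 p.2) = fun p : ℝ × K => g p.2 +
      ∫ s in Set.Ioc (0:ℝ) T, (Set.Ioi (tauc T p.1)).indicator (fun s => FF μ f u s p.2) s := by
    funext p; exact hrw p.1 p.2
  rw [this]
  refine (hg.comp measurable_snd).add ?_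
  have hind : Measurable fun q : (ℝ × K) × ℝ =>
      (Set.Ioi (tauc T q.1.1)).indicator (fun s => FF μ f u s q.1.2) q.2 := by
    have : (fun q : (ℝ × K) × ℝ =>
        (Set.Ioi (tauc T q.1.1)).indicator (fun s => FF μ f u s q.1.2) q.2) =
        fun q : (ℝ × K) × ℝ =>
          if tauc T q.1.1 < q.2 then FF μ f u q.2 q.1.2 else 0 := by
      funext q
      simp [Set.indicator_apply, Set.mem_Ioi]
    rw [this]
    refine Measurable.ite ?_ (hFF.comp (measurable_snd.prodMk (measurable_fst.snd)))
      measurable_const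
    exact measurableSet_lt (htau.comp measurable_fst.fst) measurable_snd
  exact (hind.stronglyMeasurable.integral_prod_right').measurable

open intervalIntegral in
/-- Explicit computation of the iterated-contraction integral. -/
lemma integral_poly (M c : ℝ) (n : ℕ) {τ T : ℝ} (hτ : τ ≤ T) :
    M * ∫ s in Set.Ioc τ T, c * (M * (T - s)) ^ n / (n.factorial : ℝ) =
      c * (M * (T - τ)) ^ (n + 1) / ((n + 1).factorial : ℝ) := by
  have h1 : ∫ s in Set.Ioc τ T, (T - s) ^ n = (T - τ) ^ (n + 1) / (n + 1) := by
    rw [← intervalIntegral.integral_of_le hτ]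
    have h := intervalIntegral.integral_comp_sub_left (a := τ) (b := T)
      (fun u : ℝ => u ^ n) T
    rw [h, sub_self]
    rw [integral_pow]
    simp [zero_pow (Nat.succ_ne_zero n)]
  have h2 : (fun s => c * (M * (T - s)) ^ n / (n.factorial : ℝ)) =
      fun s => (c * M ^ n / (n.factorial : ℝ)) * (T - s) ^ n := by
    funext s; rw [mul_pow]; ring
  rw [h2, MeasureTheory.integral_const_mul, h1]
  have hn : ((n.factorial : ℝ)) ≠ 0 := Nat.cast_ne_zero.2 n.factorial_ne_zero
  have hn1 : ((n:ℝ) + 1) ≠ 0 := by positivity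
  rw [Nat.factorial_succ, mul_pow]
  push_cast
  field_simp
  ring

end Lemmas

end Aux


/-- **Well-posedness of the nonlinear Kolmogorov equation with bounded data**
(Lemma 4.1): if `g` and `f(·,·,0,0)` are uniformly bounded, the nonlinear Kolmogorov
equation `v(t,x) = g(x) + ∫_t^T 𝓛_s v(s,x) ds + ∫_t^T f(s,x,v(s,x),v(s,·)-v(s,x)) ds`
has a unique solution in the class of bounded measurable functions. -/
theorem kolmogorov_bounded_wellposed
    {K : Type*} [MeasurableSpace K] [MeasurableSingletonClass K]
    (μ : RateMeasure K) (T : ℝ) (hT : 0 < T)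
    (f : ℝ → K → ℝ → (K → ℝ) → ℝ) (g : K → ℝ) (L L' : ℝ) (hL : 0 ≤ L) (hL' : 0 ≤ L')
    (f_meas : ∀ z : K → ℝ, Measurable z → (∃ C, ∀ y, |z y| ≤ C) →
      Measurable fun p : (ℝ × K) × ℝ => f p.1.1 p.1.2 p.2 z)
    (f_lip : ∀ (s : ℝ) (x : K) (r r' : ℝ) (z z' : K → ℝ), InL2 μ s x z → InL2 μ s x z' →
      |f s x r z - f s x r' z'| ≤ L' * |r - r'| +
        L * Real.sqrt (∫⁻ y, ENNReal.ofReal ((z y - z' y) ^ 2) ∂(μ.ν s x)).toReal)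
    (f_conv : ∀ (s : ℝ) (x : K) (r : ℝ) (z : K → ℝ), ¬ InL2 μ s x z →
      f s x r z = f s x r fun _ => 0)
    (f_comp_meas : ∀ u : ℝ → K → ℝ, Measurable (fun p : ℝ × K => u p.1 p.2) →
      (∃ C, ∀ s x, |u s x| ≤ C) →
      Measurable fun p : ℝ × K => f p.1 p.2 (u p.1 p.2) fun y => u p.1 y - u p.1 p.2)
    (g_meas : Measurable g)
    (bdd : ∃ C : ℝ, ∀ s ∈ Set.Icc (0:ℝ) T, ∀ x : K, |g x| + |f s x 0 fun _ => 0| ≤ C) :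
    ∃ v : ℝ → K → ℝ,
      ((Measurable fun p : ℝ × K => v p.1 p.2) ∧ (∃ C : ℝ, ∀ s x, |v s x| ≤ C) ∧
        ∀ t ∈ Set.Icc (0:ℝ) T, ∀ x : K,
          v t x = g x + (∫ s in Set.Ioc t T, (∫ y, (v s y - v s x) ∂(μ.ν s x))) +
            ∫ s in Set.Ioc t T, f s x (v s x) fun y => v s y - v s x) ∧
      ∀ v' : ℝ → K → ℝ,
        (Measurable fun p : ℝ × K => v' p.1 p.2) → (∃ C : ℝ, ∀ s x, |v' s x| ≤ C) →
        (∀ t ∈ Set.Icc (0:ℝ) T, ∀ x : K,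
          v' t x = g x + (∫ s in Set.Ioc t T, (∫ y, (v' s y - v' s x) ∂(μ.ν s x))) +
            ∫ s in Set.Ioc t T, f s x (v' s x) fun y => v' s y - v' s x) →
        ∀ t ∈ Set.Icc (0:ℝ) T, ∀ x : K, v' t x = v t x := by
  classical
  rcases isEmpty_or_nonempty K with hK | hK
  · exact ⟨fun _ _ => 0, ⟨measurable_const, ⟨0, fun s x => (IsEmpty.false x).elim⟩,
      fun t ht x => (IsEmpty.false x).elim⟩, fun v' _ _ _ t ht x => (IsEmpty.false x).elim⟩
  obtain ⟨C, hC⟩ := bdd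
  have hT0 : 0 ≤ T := hT.le
  have hLam0 : 0 ≤ μ.bound.toReal := ENNReal.toReal_nonneg
  set C0 : ℝ := max C 0 with hC0def
  have hC0 : 0 ≤ C0 := le_max_right _ _
  have hg : ∀ x, |g x| ≤ C0 := fun x =>
    le_max_of_le_left (le_trans (le_add_of_nonneg_right (abs_nonneg _)) (hC 0 ⟨le_refl 0, hT0⟩ x))
  have hf0 : ∀ s ∈ Set.Icc (0:ℝ) T, ∀ x, |f s x 0 (fun _ => 0)| ≤ C0 := fun s hs x =>
    le_max_of_le_left (le_trans (le_add_of_nonneg_left (abs_nonneg _)) (hC s hs x))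
  set MM : ℝ := 2 * μ.bound.toReal + L' + 2 * L * Real.sqrt μ.bound.toReal with hMMdef
  have hMM0 : 0 ≤ MM := by
    have := Real.sqrt_nonneg μ.bound.toReal
    rw [hMMdef]; positivity
  set D : ℝ := T * (2 * C0 * μ.bound.toReal +
    (C0 + L' * C0 + 2 * L * C0 * Real.sqrt μ.bound.toReal)) with hDdef
  have hD0 : 0 ≤ D := by
    have := Real.sqrt_nonneg μ.bound.toReal
    rw [hDdef]; positivity
  set S : ℕ → ℝ := fun n => ∑ k ∈ Finset.range n, D * (MM * T) ^ k / (k.factorial : ℝ)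
    with hSdef
  have hSnn : ∀ n, 0 ≤ S n := fun n => Finset.sum_nonneg fun k _ => by positivity
  have hSB : ∀ n, S n ≤ D * Real.exp (MM * T) := by
    intro n
    have h1 : S n = D * ∑ k ∈ Finset.range n, (MM * T) ^ k / (k.factorial : ℝ) := by
      simp only [hSdef]
      rw [Finset.mul_sum]
      exact Finset.sum_congr rfl fun k _ => by rw [mul_div_assoc]
    rw [h1]
    exact mul_le_mul_of_nonneg_left (Real.sum_le_exp_of_nonneg (by positivity) n) hD0
  set B : ℝ := C0 + D * Real.exp (MM * T) with hBdef
  have hB0 : 0 ≤ B := by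
    rw [hBdef]
    exact add_nonneg hC0 (mul_nonneg hD0 (Real.exp_pos _).le)
  obtain ⟨w, hw0, hwsucc⟩ : ∃ w : ℕ → ℝ → K → ℝ, w 0 = (fun _ x => g x) ∧
      ∀ n, w (n + 1) = Phi μ T f g (w n) :=
    ⟨vseq μ T f g, rfl, fun n => rfl⟩
  -- main induction: measurability, uniform bound, and successive-difference bound
  have main : ∀ n, (Measurable fun p : ℝ × K => w n p.1 p.2) ∧
      (∀ t x, |w n t x| ≤ C0 + S n) ∧
      (∀ t x, |w (n + 1) t x - w n t x| ≤
        D * (MM * (T - tauc T t)) ^ n / (n.factorial : ℝ)) := by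
    intro n
    induction n with
    | zero =>
      have hm0 : Measurable fun p : ℝ × K => w 0 p.1 p.2 := by
        simp only [hw0]
        exact g_meas.comp measurable_snd
      have hb0 : ∀ s x, |w 0 s x| ≤ C0 := fun s x => by simp only [hw0]; exact hg x
      refine ⟨hm0, fun t x => by simpa [hSdef] using hb0 t x, fun t x => ?_⟩
      have h := Phi_sub_g_bound (g := g) μ hT0 hL hL' hC0 f_lip hf0 hC0 hm0 hb0 t x
      have h2 : w 1 t x - w 0 t x = Phi μ T f g (w 0) t x - g x := by
        rw [hwsucc 0, hw0]
      rw [h2]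
      simpa [hDdef] using h
    | succ n ih =>
      obtain ⟨hm, hbd, hΔ⟩ := ih
      have hCn0 : 0 ≤ C0 + S n := by linarith [hSnn n]
      have hfm_n : Measurable fun p : ℝ × K =>
          f p.1 p.2 (w n p.1 p.2) (fun y => w n p.1 y - w n p.1 p.2) :=
        f_comp_meas (w n) hm ⟨C0 + S n, hbd⟩
      have hm1 : Measurable fun p : ℝ × K => w (n + 1) p.1 p.2 := by
        simp only [hwsucc n]
        exact Phi_meas μ hT0 g_meas hm hfm_n
      have hpowle : ∀ t, (MM * (T - tauc T t)) ^ n ≤ (MM * T) ^ n := by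
        intro t
        obtain ⟨h1, h2⟩ := tauc_mem hT0 t
        exact pow_le_pow_left₀ (mul_nonneg hMM0 (by linarith))
          (mul_le_mul_of_nonneg_left (by linarith) hMM0) n
      have hbd1 : ∀ t x, |w (n + 1) t x| ≤ C0 + S (n + 1) := by
        intro t x
        have h1 := hΔ t x
        have h2 : D * (MM * (T - tauc T t)) ^ n / (n.factorial : ℝ) ≤
            D * (MM * T) ^ n / (n.factorial : ℝ) := by
          have := hpowle t
          gcongr
        have h3 : |w (n + 1) t x| ≤ |w n t x| + |w (n + 1) t x - w n t x| := by
          have := abs_add_le (w n t x) (w (n + 1) t x - w n t x)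
          simpa using this
        have h4 : S (n + 1) = S n + D * (MM * T) ^ n / (n.factorial : ℝ) := by
          simp only [hSdef, Finset.sum_range_succ]
        rw [h4]
        linarith [hbd t x]
      have hCn1 : 0 ≤ C0 + S (n + 1) := by linarith [hSnn (n + 1)]
      have hfm_n1 : Measurable fun p : ℝ × K =>
          f p.1 p.2 (w (n + 1) p.1 p.2) (fun y => w (n + 1) p.1 y - w (n + 1) p.1 p.2) :=
        f_comp_meas (w (n + 1)) hm1 ⟨C0 + S (n + 1), hbd1⟩
      refine ⟨hm1, hbd1, ?_⟩
      intro t x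
      have hεcont : Continuous fun s : ℝ => D * (MM * (T - s)) ^ n / (n.factorial : ℝ) := by
        fun_prop
      have hεb : ∀ s ∈ Set.Ioc (0:ℝ) T, ∀ x',
          |w (n + 1) s x' - w n s x'| ≤ D * (MM * (T - s)) ^ n / (n.factorial : ℝ) := by
        intro s hs x'
        have := hΔ s x'
        rwa [tauc_eq ⟨hs.1.le, hs.2⟩] at this
      have hεnn : ∀ s ∈ Set.Ioc (0:ℝ) T,
          0 ≤ D * (MM * (T - s)) ^ n / (n.factorial : ℝ) := by
        intro s hs
        have : 0 ≤ T - s := by linarith [hs.2]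
        positivity
      have hPD := Phi_diff (g := g) μ hT0 hL hL' f_lip hf0 hCn1 hCn0 hm1 hbd1 hm hbd
        hfm_n1 hfm_n hεcont.measurable (hεcont.integrableOn_Ioc) hεnn hεb t x
      have hcomp := integral_poly MM D n (tauc_mem hT0 t).2
      calc |w (n + 1 + 1) t x - w (n + 1) t x|
          = |Phi μ T f g (w (n + 1)) t x - Phi μ T f g (w n) t x| := by
            rw [hwsucc (n + 1), hwsucc n]
        _ ≤ MM * ∫ s in Set.Ioc (tauc T t) T,
              D * (MM * (T - s)) ^ n / (n.factorial : ℝ) := by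
            rw [hMMdef]; exact hPD
        _ = D * (MM * (T - tauc T t)) ^ (n + 1) / ((n + 1).factorial : ℝ) := hcomp
  have hwB : ∀ n t x, |w n t x| ≤ B := by
    intro n t x
    calc |w n t x| ≤ C0 + S n := (main n).2.1 t x
      _ ≤ B := by rw [hBdef]; linarith [hSB n]
  set a : ℕ → ℝ := fun k => D * (MM * T) ^ k / (k.factorial : ℝ) with hadef
  have ha : Summable a := by
    have := (Real.summable_pow_div_factorial (MM * T)).mul_left D
    refine this.congr fun k => ?_
    simp only [hadef]
    rw [mul_div_assoc]
  have hann : ∀ k, 0 ≤ a k := fun k => by simp only [hadef]; positivity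
  have hΔ' : ∀ n t x, |w (n + 1) t x - w n t x| ≤ a n := by
    intro n t x
    refine le_trans ((main n).2.2 t x) ?_
    obtain ⟨h1, h2⟩ := tauc_mem hT0 t
    have hpowle : (MM * (T - tauc T t)) ^ n ≤ (MM * T) ^ n :=
      pow_le_pow_left₀ (mul_nonneg hMM0 (by linarith))
        (mul_le_mul_of_nonneg_left (by linarith) hMM0) n
    simp only [hadef]
    gcongr
  have hsum_pt : ∀ t x, Summable fun n => w (n + 1) t x - w n t x := fun t x =>
    Summable.of_norm_bounded ha fun n => by
      rw [Real.norm_eq_abs]; exact hΔ' n t x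
  set vv : ℝ → K → ℝ := fun t x => g x + ∑' n, (w (n + 1) t x - w n t x) with hvvdef
  have htend : ∀ t x, Filter.Tendsto (fun n => w n t x) Filter.atTop (nhds (vv t x)) := by
    intro t x
    have h1 := (hsum_pt t x).hasSum.tendsto_sum_nat
    have h2 := h1.const_add (g x)
    refine h2.congr fun n => ?_
    rw [Finset.sum_range_sub (fun i => w i t x)]
    simp only [hw0]
    ring
  set e : ℕ → ℝ := fun n => ∑' k, a (k + n) with hedef
  have he0 : Filter.Tendsto e Filter.atTop (nhds 0) := tendsto_sum_nat_add a
  have henn : ∀ n, 0 ≤ e n := fun n => tsum_nonneg fun k => hann (k + n)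
  have htail : ∀ n t x, |vv t x - w n t x| ≤ e n := by
    intro n t x
    have hs1 := hsum_pt t x
    have hadd := Summable.sum_add_tsum_nat_add (f := fun i => w (i + 1) t x - w i t x) n hs1
    have hrange : ∑ i ∈ Finset.range n, (w (i + 1) t x - w i t x) = w n t x - g x := by
      rw [Finset.sum_range_sub (fun i => w i t x)]
      simp only [hw0]
    have heq : vv t x - w n t x = ∑' k, (w (k + n + 1) t x - w (k + n) t x) := by
      simp only [hvvdef]
      linarith [hadd, hrange]
    rw [heq]
    have hs2 : Summable fun k => w (k + n + 1) t x - w (k + n) t x :=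
      (summable_nat_add_iff (f := fun i => w (i + 1) t x - w i t x) n).2 hs1
    have hs3 : Summable fun k => a (k + n) := (summable_nat_add_iff (f := a) n).2 ha
    calc |∑' k, (w (k + n + 1) t x - w (k + n) t x)|
        ≤ ∑' k, |w (k + n + 1) t x - w (k + n) t x| := by
          rw [← Real.norm_eq_abs]
          refine (norm_tsum_le_tsum_norm ?_).trans_eq (by simp [Real.norm_eq_abs])
          simpa [Real.norm_eq_abs] using hs2.abs
      _ ≤ ∑' k, a (k + n) := Summable.tsum_le_tsum (fun k => hΔ' (k + n) t x) hs2.abs hs3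
  have hvmeas : Measurable fun p : ℝ × K => vv p.1 p.2 :=
    measurable_of_tendsto_metrizable' Filter.atTop (fun n => (main n).1)
      (tendsto_pi_nhds.2 fun p => htend p.1 p.2)
  have hvB : ∀ t x, |vv t x| ≤ B := by
    intro t x
    refine le_of_tendsto ((continuous_abs.tendsto _).comp (htend t x))
      (Filter.Eventually.of_forall fun n => hwB n t x)
  have hfmv : Measurable fun p : ℝ × K =>
      f p.1 p.2 (vv p.1 p.2) (fun y => vv p.1 y - vv p.1 p.2) :=
    f_comp_meas vv hvmeas ⟨B, hvB⟩
  -- the fixed point property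
  have hfix : ∀ t x, vv t x = Phi μ T f g vv t x := by
    intro t x
    have hub : ∀ n, |vv t x - Phi μ T f g vv t x| ≤ e (n + 1) + MM * T * e n := by
      intro n
      have h1 : |vv t x - w (n + 1) t x| ≤ e (n + 1) := htail (n + 1) t x
      have hfm_n : Measurable fun p : ℝ × K =>
          f p.1 p.2 (w n p.1 p.2) (fun y => w n p.1 y - w n p.1 p.2) :=
        f_comp_meas (w n) (main n).1 ⟨C0 + S n, (main n).2.1⟩
      have hεint : MeasureTheory.IntegrableOn (fun _ : ℝ => e n) (Set.Ioc (0:ℝ) T) :=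
        MeasureTheory.integrableOn_const measure_Ioc_lt_top.ne
      have hεb : ∀ s ∈ Set.Ioc (0:ℝ) T, ∀ x', |w n s x' - vv s x'| ≤ e n := by
        intro s hs x'
        rw [abs_sub_comm]
        exact htail n s x'
      have h2 := Phi_diff (g := g) μ hT0 hL hL' f_lip hf0 hB0 hB0 (main n).1 (hwB n)
        hvmeas hvB hfm_n hfmv measurable_const hεint (fun s _ => henn n) hεb t x
      have h3 : ∫ _ in Set.Ioc (tauc T t) T, e n = (T - tauc T t) * e n := by
        rw [MeasureTheory.setIntegral_const, measureReal_def, Real.volume_Ioc, smul_eq_mul,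
          ENNReal.toReal_ofReal (sub_nonneg.2 (tauc_mem hT0 t).2)]
      have h4 : MM * ((T - tauc T t) * e n) ≤ MM * (T * e n) := by
        obtain ⟨hτ1, hτ2⟩ := tauc_mem hT0 t
        exact mul_le_mul_of_nonneg_left
          (mul_le_mul_of_nonneg_right (by linarith) (henn n)) hMM0
      have h5 : vv t x - Phi μ T f g vv t x =
          (vv t x - w (n + 1) t x) + (Phi μ T f g (w n) t x - Phi μ T f g vv t x) := by
        rw [hwsucc n]; ring
      have h6 : |Phi μ T f g (w n) t x - Phi μ T f g vv t x| ≤ MM * T * e n := by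
        refine le_trans ?_ (le_of_eq (by ring : MM * (T * e n) = MM * T * e n))
        refine le_trans ?_ h4
        rw [← h3]
        rw [hMMdef]
        exact h2
      calc |vv t x - Phi μ T f g vv t x|
          ≤ |vv t x - w (n + 1) t x| + |Phi μ T f g (w n) t x - Phi μ T f g vv t x| := by
            rw [h5]; exact abs_add_le _ _
        _ ≤ e (n + 1) + MM * T * e n := add_le_add h1 h6
    have hlim : Filter.Tendsto (fun n => e (n + 1) + MM * T * e n)
        Filter.atTop (nhds 0) := by
      have l1 : Filter.Tendsto (fun n => e (n + 1)) Filter.atTop (nhds 0) :=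
        he0.comp (Filter.tendsto_add_atTop_nat 1)
      have l2 := he0.const_mul (MM * T)
      have l3 := l1.add l2
      simpa [mul_assoc] using l3
    have habs : |vv t x - Phi μ T f g vv t x| ≤ 0 :=
      ge_of_tendsto hlim (Filter.Eventually.of_forall hub)
    exact sub_eq_zero.1 (abs_nonpos_iff.1 habs)
  -- the equation in the required form
  have heqn : ∀ t ∈ Set.Icc (0:ℝ) T, ∀ x,
      vv t x = g x + (∫ s in Set.Ioc t T, (∫ y, (vv s y - vv s x) ∂(μ.ν s x))) +
        ∫ s in Set.Ioc t T, f s x (vv s x) fun y => vv s y - vv s x := by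
    intro t ht x
    have h1 := FF1_integrableOn (T := T) μ hB0 hvmeas hvB (a := t) x
    have h2 := FF2_integrableOn μ hL hL' f_lip hf0 hB0 hvmeas hvB hfmv ht.1 x
    calc vv t x = Phi μ T f g vv t x := hfix t x
      _ = g x + ∫ s in Set.Ioc t T, FF μ f vv s x := by
          unfold Phi
          rw [tauc_eq ht]
      _ = g x + ((∫ s in Set.Ioc t T, (∫ y, (vv s y - vv s x) ∂(μ.ν s x))) +
            ∫ s in Set.Ioc t T, f s x (vv s x) fun y => vv s y - vv s x) := by
          rw [show (fun s => FF μ f vv s x) = fun s =>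
            (∫ y, (vv s y - vv s x) ∂(μ.ν s x)) +
              f s x (vv s x) (fun y => vv s y - vv s x) from rfl,
            MeasureTheory.integral_add h1 h2]
      _ = _ := by ring
  refine ⟨vv, ⟨hvmeas, ⟨B, hvB⟩, heqn⟩, ?_⟩
  -- uniqueness
  rintro v' hv'm ⟨C', hv'b⟩ hv'eq t ht x
  have hv'b' : ∀ s x, |v' s x| ≤ max C' 0 := fun s x => le_max_of_le_left (hv'b s x)
  have hC'0 : 0 ≤ max C' 0 := le_max_right _ _
  set CC : ℝ := max C' 0 + B with hCCdef
  have hCC0 : 0 ≤ CC := by rw [hCCdef]; linarith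
  have hfm_v' : Measurable fun p : ℝ × K =>
      f p.1 p.2 (v' p.1 p.2) (fun y => v' p.1 y - v' p.1 p.2) :=
    f_comp_meas v' hv'm ⟨C', hv'b⟩
  have hv'fix : ∀ t' ∈ Set.Icc (0:ℝ) T, ∀ x', v' t' x' = Phi μ T f g v' t' x' := by
    intro t' ht' x'
    have h1 := FF1_integrableOn (T := T) μ hC'0 hv'm hv'b' (a := t') x'
    have h2 := FF2_integrableOn μ hL hL' f_lip hf0 hC'0 hv'm hv'b' hfm_v' ht'.1 x'
    rw [hv'eq t' ht' x']
    unfold Phi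
    rw [tauc_eq ht']
    rw [show (fun s => FF μ f v' s x') = fun s =>
      (∫ y, (v' s y - v' s x') ∂(μ.ν s x')) +
        f s x' (v' s x') (fun y => v' s y - v' s x') from rfl,
      MeasureTheory.integral_add h1 h2]
    ring
  have claim : ∀ n, ∀ t' ∈ Set.Icc (0:ℝ) T, ∀ x',
      |v' t' x' - vv t' x'| ≤ CC * (MM * (T - t')) ^ n / (n.factorial : ℝ) := by
    intro n
    induction n with
    | zero =>
      intro t' ht' x'
      have : |v' t' x' - vv t' x'| ≤ CC := by
        calc |v' t' x' - vv t' x'| ≤ |v' t' x'| + |vv t' x'| := abs_sub _ _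
          _ ≤ CC := by rw [hCCdef]; linarith [hv'b' t' x', hvB t' x']
      simpa using this
    | succ n ih =>
      intro t' ht' x'
      have hεcont : Continuous fun s : ℝ => CC * (MM * (T - s)) ^ n / (n.factorial : ℝ) := by
        fun_prop
      have hεnn : ∀ s ∈ Set.Ioc (0:ℝ) T,
          0 ≤ CC * (MM * (T - s)) ^ n / (n.factorial : ℝ) := by
        intro s hs
        have : 0 ≤ T - s := by linarith [hs.2]
        positivity
      have hεb : ∀ s ∈ Set.Ioc (0:ℝ) T, ∀ x'',
          |v' s x'' - vv s x''| ≤ CC * (MM * (T - s)) ^ n / (n.factorial : ℝ) :=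
        fun s hs x'' => ih s ⟨hs.1.le, hs.2⟩ x''
      have hPD := Phi_diff (g := g) μ hT0 hL hL' f_lip hf0 hC'0 hB0 hv'm hv'b'
        hvmeas hvB hfm_v' hfmv hεcont.measurable (hεcont.integrableOn_Ioc) hεnn hεb t' x'
      have h1 : v' t' x' - vv t' x' = Phi μ T f g v' t' x' - Phi μ T f g vv t' x' := by
        rw [← hv'fix t' ht' x', ← hfix t' x']
      rw [h1]
      rw [← hMMdef] at hPD
      refine le_trans hPD ?_
      rw [tauc_eq ht']
      exact le_of_eq (integral_poly MM CC n ht'.2)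
  have hlim : Filter.Tendsto (fun n => CC * (MM * (T - t)) ^ n / (n.factorial : ℝ))
      Filter.atTop (nhds 0) := by
    have := (FloorSemiring.tendsto_pow_div_factorial_atTop (MM * (T - t))).const_mul CC
    simp only [mul_zero] at this
    refine this.congr fun n => ?_
    rw [mul_div_assoc]
  have habs : |v' t x - vv t x| ≤ 0 :=
    ge_of_tendsto hlim (Filter.Eventually.of_forall fun n => claim n t ht x)
  exact sub_eq_zero.1 (abs_nonpos_iff.1 habs)


end PureJumpBSDE
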